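/- Let d ≥ 1 and let W : ℝ^{d×d} → ℝ be differentiable on the open set GL⁺(d) and frame indifferent, i.e. W(QF) = W(F) for all Q ∈ SO(d) and all F ∈ GL⁺(d). Fix F ∈ GL⁺(d) and let S ∈ ℝ^{d×d} be the matrix representing the Fréchet derivative of W at F, i.e. the derivative of W at F applied to G ∈ ℝ^{d×d} equals S : G. Then the matrix F⁻¹S is symmetric; equivalently, S Fᵀ = F Sᵀ. -/

import Mathlib

attribute [local instance] Matrix.frobeniusNormedAddCommGroup Matrix.frobeniusNormedSpace

open Matrix

/-- If `W` is differentiable on `GL⁺(d)` and frame indifferent, and `S` represents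
the Fréchet derivative of `W` at `F ∈ GL⁺(d)` with respect to the Frobenius inner
product `A : B = trace(Aᵀ B)`, then `F⁻¹ S` is symmetric, i.e. `S Fᵀ = F Sᵀ`. -/
theorem frame_indifference_stress_symmetric {d : ℕ} (hd : 1 ≤ d)
    (W : Matrix (Fin d) (Fin d) ℝ → ℝ)
    (hWdiff : DifferentiableOn ℝ W {F : Matrix (Fin d) (Fin d) ℝ | 0 < F.det})
    (hWframe : ∀ Q F : Matrix (Fin d) (Fin d) ℝ,
      Qᵀ * Q = 1 → Q.det = 1 → 0 < F.det → W (Q * F) = W F)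
    (F S : Matrix (Fin d) (Fin d) ℝ) (hF : 0 < F.det)
    (L : Matrix (Fin d) (Fin d) ℝ →L[ℝ] ℝ)
    (hL : HasFDerivAt W L F)
    (hLS : ∀ G : Matrix (Fin d) (Fin d) ℝ, L G = Matrix.trace (Sᵀ * G)) :
    S * Fᵀ = F * Sᵀ := by
  letI : NormedRing (Matrix (Fin d) (Fin d) ℝ) := Matrix.frobeniusNormedRing
  letI : NormedAlgebra ℝ (Matrix (Fin d) (Fin d) ℝ) := Matrix.frobeniusNormedAlgebra
  have key : ∀ A : Matrix (Fin d) (Fin d) ℝ, Aᵀ = -A →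
      Matrix.trace (Sᵀ * (A * F)) = 0 := by
    intro A hA
    -- `Q t = exp (t • A)` is special orthogonal
    have hexp : ∀ s t : ℝ,
        NormedSpace.exp (s • A) * NormedSpace.exp (t • A)
          = NormedSpace.exp ((s + t) • A) := by
      intro s t
      rw [← Matrix.exp_add_of_commute _ _ (((Commute.refl A).smul_left s).smul_right t),
        add_smul]
    have hQorth : ∀ t : ℝ,
        (NormedSpace.exp (t • A))ᵀ * NormedSpace.exp (t • A) = 1 := by
      intro t
      have h1 : (NormedSpace.exp (t • A))ᵀ = NormedSpace.exp ((-t) • A) := by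
        rw [← Matrix.exp_transpose]
        congr 1
        rw [transpose_smul, hA, smul_neg, ← neg_smul]
      rw [h1, hexp, neg_add_cancel, zero_smul, NormedSpace.exp_zero]
    have hdetpos : ∀ t : ℝ, 0 < (NormedSpace.exp (t • A)).det := by
      intro t
      have h2 : NormedSpace.exp (t • A)
          = NormedSpace.exp ((t / 2) • A) * NormedSpace.exp ((t / 2) • A) := by
        rw [hexp]; norm_num
      have hne : (NormedSpace.exp ((t / 2) • A)).det ≠ 0 := by
        have hm : NormedSpace.exp ((t / 2) • A) * NormedSpace.exp ((-(t / 2)) • A) = 1 := by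
          rw [hexp, add_neg_cancel, zero_smul, NormedSpace.exp_zero]
        have := congrArg Matrix.det hm
        rw [Matrix.det_mul, Matrix.det_one] at this
        intro h0; rw [h0, zero_mul] at this; norm_num at this
      rw [h2, Matrix.det_mul]
      exact mul_self_pos.mpr hne
    have hdet1 : ∀ t : ℝ, (NormedSpace.exp (t • A)).det = 1 := by
      intro t
      have h := congrArg Matrix.det (hQorth t)
      rw [Matrix.det_mul, Matrix.det_transpose, Matrix.det_one] at h
      nlinarith [hdetpos t]
    have hconst : ∀ t : ℝ, W (NormedSpace.exp (t • A) * F) = W F := fun t =>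
      hWframe _ _ (hQorth t) (hdet1 t) hF
    have hφ : HasDerivAt (fun t : ℝ => NormedSpace.exp (t • A) * F) (A * F) 0 := by
      have h := (hasDerivAt_exp_smul_const (𝕂 := ℝ) A (0 : ℝ)).mul_const F
      simp at h
      exact h
    have hF0 : NormedSpace.exp ((0 : ℝ) • A) * F = F := by simp
    have hL' : HasFDerivAt W L (NormedSpace.exp ((0 : ℝ) • A) * F) := by
      rw [hF0]; exact hL
    have hcomp : HasDerivAt (fun t : ℝ => W (NormedSpace.exp (t • A) * F)) (L (A * F)) 0 :=
      hL'.comp_hasDerivAt 0 hφ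
    have hzero : HasDerivAt (fun t : ℝ => W (NormedSpace.exp (t • A) * F)) 0 0 := by
      have heq : (fun t : ℝ => W (NormedSpace.exp (t • A) * F)) = fun _ => W F :=
        funext hconst
      rw [heq]; exact hasDerivAt_const 0 _
    have hL0 : L (A * F) = 0 := hcomp.unique hzero
    rw [hLS] at hL0
    exact hL0
  -- algebra: `trace (M * A) = 0` for all skew `A`, with `M = F * Sᵀ`
  have hMA : ∀ A : Matrix (Fin d) (Fin d) ℝ, Aᵀ = -A →
      Matrix.trace (F * Sᵀ * A) = 0 := by
    intro A hA
    have h := key A hA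
    rw [← mul_assoc, Matrix.trace_mul_cycle] at h
    exact h
  set M : Matrix (Fin d) (Fin d) ℝ := F * Sᵀ with hM
  set A : Matrix (Fin d) (Fin d) ℝ := M - Mᵀ with hAdef
  have hAskew : Aᵀ = -A := by
    rw [hAdef, transpose_sub, transpose_transpose, neg_sub]
  have h1 : Matrix.trace (M * A) = 0 := hMA A hAskew
  have h2 : Matrix.trace (Mᵀ * A) = 0 := by
    have e1 : Matrix.trace (Mᵀ * A) = Matrix.trace ((Mᵀ * A)ᵀ) :=
      (Matrix.trace_transpose _).symm
    rw [e1, transpose_mul, transpose_transpose, hAskew, Matrix.neg_mul, Matrix.trace_neg,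
      Matrix.trace_mul_comm, h1, neg_zero]
  have hAA : Matrix.trace (A * Aᵀ) = 0 := by
    rw [hAskew, Matrix.mul_neg, Matrix.trace_neg]
    have : Matrix.trace (A * A) = Matrix.trace (M * A) - Matrix.trace (Mᵀ * A) := by
      rw [hAdef, Matrix.sub_mul, Matrix.trace_sub]
    rw [this, h1, h2, sub_zero, neg_zero]
  have hA0 : A = 0 := by
    have hsum : ∑ i, ∑ j, A i j ^ 2 = 0 := by
      have : Matrix.trace (A * Aᵀ) = ∑ i, ∑ j, A i j ^ 2 := by
        simp [Matrix.trace, Matrix.mul_apply, Matrix.diag, sq]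
      rw [← this, hAA]
    ext i j
    have h := (Finset.sum_eq_zero_iff_of_nonneg
      (fun i _ => Finset.sum_nonneg fun j _ => sq_nonneg (A i j))).mp hsum i (Finset.mem_univ i)
    have h2 := (Finset.sum_eq_zero_iff_of_nonneg
      (fun j _ => sq_nonneg (A i j))).mp h j (Finset.mem_univ j)
    have := (pow_eq_zero_iff two_ne_zero).mp h2
    simpa using this
  have hMsymm : Mᵀ = M := by
    have := sub_eq_zero.mp (hAdef ▸ hA0)
    exact this.symm
  calc S * Fᵀ = Mᵀ := by rw [hM, transpose_mul, transpose_transpose]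
    _ = M := hMsymm
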